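/- Let n₁, n₂ be positive integers, Q_α = 2 n_α + 2, c_α = n_α!/(4(π/2)^{n_α+1}), and for t > 0 and g = (s,z) ∈ ℋ_{n_α} set S_α(t,g) = c_α/(|z|² + t − i s)^{n_α+1}. There is a constant C > 0 depending only on n₁, n₂ such that for all t₁, t₂ > 0, τ₁, τ₂ > 0 and γ₁, γ₂ > 0, ∫_{{(g₁,g₂) : ‖g₁‖₁ > γ₁τ₁ and ‖g₂‖₂ > γ₂τ₂}} |S₁(t₁,g₁) − S₁(t₁+τ₁², g₁)| · |S₂(t₂,g₂) − S₂(t₂+τ₂², g₂)| dg₁ dg₂ ≤ C γ₁^{−2} γ₂^{−2}. -/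

import Mathlib

open MeasureTheory
open scoped ENNReal

noncomputable section

/-- A point of the Heisenberg group ℋ_n : `(s, z) ∈ ℝ × ℂⁿ`. -/
abbrev Heis (n : ℕ) := ℝ × (Fin n → ℂ)

/-- `|z|² = ∑ⱼ |zⱼ|²`. -/
def znormSq {n : ℕ} (z : Fin n → ℂ) : ℝ := ∑ j, Complex.normSq (z j)

/-- The homogeneous norm `‖(s,z)‖ = (|z|⁴ + s²)^{1/4}`. -/
def hnorm {n : ℕ} (g : Heis n) : ℝ := ((znormSq g.2) ^ 2 + g.1 ^ 2) ^ (1/4 : ℝ)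

/-- The constant `c = n! / (4 (π/2)^{n+1})`. -/
def szegoConst (n : ℕ) : ℝ := (Nat.factorial n : ℝ) / (4 * (Real.pi / 2) ^ (n + 1))

/-- The Cauchy–Szegő kernel `S(t,g) = c/(|z|² + t − i s)^{n+1}`. -/
def Szego (n : ℕ) (t : ℝ) (g : Heis n) : ℂ :=
  (szegoConst n : ℂ) / (((znormSq g.2 : ℝ) : ℂ) + (t : ℂ) - Complex.I * (g.1 : ℂ)) ^ (n + 1)


lemma znormSq_nonneg {n : ℕ} (z : Fin n → ℂ) : 0 ≤ znormSq z :=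
  Finset.sum_nonneg fun _ _ => Complex.normSq_nonneg _

lemma hnorm_nonneg {n : ℕ} (g : Heis n) : 0 ≤ hnorm g :=
  Real.rpow_nonneg (by positivity) _

lemma continuous_znormSq {n : ℕ} : Continuous (znormSq (n := n)) :=
  continuous_finset_sum _ fun j _ => Complex.continuous_normSq.comp (continuous_apply j)

lemma continuous_hnorm {n : ℕ} : Continuous (hnorm (n := n)) := by
  apply Continuous.rpow_const
  · exact ((continuous_znormSq.comp continuous_snd).pow 2).add (continuous_fst.pow 2)
  · exact fun _ => Or.inr (by norm_num)

lemma hnorm_sq {n : ℕ} (g : Heis n) :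
    hnorm g ^ 2 = Real.sqrt (znormSq g.2 ^ 2 + g.1 ^ 2) := by
  have h0 : (0:ℝ) ≤ znormSq g.2 ^ 2 + g.1 ^ 2 := by positivity
  rw [hnorm, Real.sqrt_eq_rpow, ← Real.rpow_natCast _ 2, ← Real.rpow_mul h0]
  norm_num

lemma hnorm_pow4 {n : ℕ} (g : Heis n) :
    hnorm g ^ 4 = znormSq g.2 ^ 2 + g.1 ^ 2 := by
  have h0 : (0:ℝ) ≤ znormSq g.2 ^ 2 + g.1 ^ 2 := by positivity
  rw [hnorm, ← Real.rpow_natCast _ 4, ← Real.rpow_mul h0]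
  norm_num

def W (n : ℕ) (t : ℝ) (g : Heis n) : ℂ :=
  ((znormSq g.2 : ℝ) : ℂ) + (t : ℂ) - Complex.I * (g.1 : ℂ)

lemma szego_eq (n : ℕ) (t : ℝ) (g : Heis n) :
    Szego n t g = (szegoConst n : ℂ) / (W n t g) ^ (n + 1) := rfl

lemma W_re {n : ℕ} (t : ℝ) (g : Heis n) : (W n t g).re = znormSq g.2 + t := by
  simp [W]

lemma W_im {n : ℕ} (t : ℝ) (g : Heis n) : (W n t g).im = -g.1 := by
  simp [W]

lemma norm_W {n : ℕ} (t : ℝ) (g : Heis n) :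
    ‖W n t g‖ = Real.sqrt ((znormSq g.2 + t) ^ 2 + g.1 ^ 2) := by
  rw [Complex.norm_def, Complex.normSq_apply, W_re, W_im]
  ring_nf

lemma hnorm_sq_le_norm_W {n : ℕ} {t : ℝ} (ht : 0 ≤ t) (g : Heis n) :
    hnorm g ^ 2 ≤ ‖W n t g‖ := by
  rw [hnorm_sq, norm_W]
  apply Real.sqrt_le_sqrt
  have := znormSq_nonneg g.2
  nlinarith

lemma norm_W_mono {n : ℕ} {t t' : ℝ} (ht : 0 ≤ t) (htt' : t ≤ t') (g : Heis n) :
    ‖W n t g‖ ≤ ‖W n t' g‖ := by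
  rw [norm_W, norm_W]
  apply Real.sqrt_le_sqrt
  have := znormSq_nonneg g.2
  nlinarith

lemma W_ne_zero {n : ℕ} {t : ℝ} (ht : 0 < t) (g : Heis n) : W n t g ≠ 0 := by
  intro h
  have := W_re t g
  rw [h] at this
  simp at this
  have := znormSq_nonneg g.2
  linarith

lemma continuous_W {n : ℕ} (t : ℝ) : Continuous (W n t) := by
  unfold W
  exact ((Complex.continuous_ofReal.comp (continuous_znormSq.comp continuous_snd)).add
    continuous_const).sub (continuous_const.mul (Complex.continuous_ofReal.comp continuous_fst))

lemma continuous_szego {n : ℕ} {t : ℝ} (ht : 0 < t) : Continuous (Szego n t) := by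
  have h : Szego n t = fun g => (szegoConst n : ℂ) / (W n t g) ^ (n + 1) := rfl
  rw [h]
  exact continuous_const.div ((continuous_W t).pow _)
    fun g => pow_ne_zero _ (W_ne_zero ht g)

lemma szegoConst_pos (n : ℕ) : 0 < szegoConst n := by
  have := Real.pi_pos
  unfold szegoConst
  positivity
lemma inv_pow_sub_le (m : ℕ) {a b : ℂ} {h : ℝ} (h0 : 0 < h)
    (hb : h ≤ ‖b‖) (hab : ‖b‖ ≤ ‖a‖) :
    ‖1/b^m - 1/a^m‖ ≤ m * ‖a - b‖ / h ^ (m+1) := by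
  induction m with
  | zero => simp
  | succ m ih =>
    have hbn : 0 < ‖b‖ := lt_of_lt_of_le h0 hb
    have han : 0 < ‖a‖ := hbn.trans_le hab
    have hb0 : b ≠ 0 := norm_pos_iff.mp hbn
    have ha0 : a ≠ 0 := norm_pos_iff.mp han
    have key : 1/b^(m+1) - 1/a^(m+1)
        = (1/b) * (1/b^m - 1/a^m) + ((a-b)/(a*b)) * (1/a^m) := by
      have hA : a^m ≠ 0 := pow_ne_zero _ ha0
      have hB : b^m ≠ 0 := pow_ne_zero _ hb0
      field_simp
      ring
    have h1 : ‖(1:ℂ)/b‖ ≤ 1/h := by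
      rw [norm_div, norm_one]
      exact one_div_le_one_div_of_le h0 hb
    have h2 : ‖(a-b)/(a*b)‖ ≤ ‖a - b‖ / (h*h) := by
      rw [norm_div, norm_mul]
      apply div_le_div_of_nonneg_left (norm_nonneg _) (by positivity)
      exact mul_le_mul (hb.trans hab) hb h0.le han.le
    have h3 : ‖(1:ℂ)/a^m‖ ≤ 1/h^m := by
      rw [norm_div, norm_one, norm_pow]
      apply one_div_le_one_div_of_le (by positivity)
      exact pow_le_pow_left₀ h0.le (hb.trans hab) m
    calc ‖1/b^(m+1) - 1/a^(m+1)‖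
        ≤ ‖(1:ℂ)/b‖ * ‖1/b^m - 1/a^m‖ + ‖(a-b)/(a*b)‖ * ‖(1:ℂ)/a^m‖ := by
          rw [key]
          exact (norm_add_le _ _).trans (by rw [norm_mul, norm_mul])
      _ ≤ (1/h) * (m * ‖a - b‖ / h^(m+1)) + (‖a - b‖/(h*h)) * (1/h^m) := by
          have hn : (0:ℝ) ≤ ‖1/b^m - 1/a^m‖ := norm_nonneg _
          gcongr
      _ = ((m+1 : ℕ) : ℝ) * ‖a - b‖ / h^(m+1+1) := by
          push_cast
          field_simp
          ring

lemma W_shift {n : ℕ} (t τ : ℝ) (g : Heis n) :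
    W n (t + τ^2) g - W n t g = ((τ^2 : ℝ) : ℂ) := by
  unfold W
  push_cast
  ring

lemma szego_diff_norm_le (n : ℕ) {t τ : ℝ} (ht : 0 < t) (hτ : 0 < τ) {g : Heis n}
    (hg : 0 < hnorm g) :
    ‖Szego n t g - Szego n (t + τ^2) g‖
      ≤ szegoConst n * (n+1) * τ^2 / hnorm g ^ (2*n+4) := by
  set b := W n t g with hbdef
  set a := W n (t + τ^2) g with hadef
  have hb : hnorm g ^ 2 ≤ ‖b‖ := hnorm_sq_le_norm_W ht.le g
  have hab : ‖b‖ ≤ ‖a‖ := norm_W_mono ht.le (by nlinarith) g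
  have h0 : 0 < hnorm g ^ 2 := by positivity
  have key := inv_pow_sub_le (n+1) h0 hb hab
  push_cast at key
  have hdiff : Szego n t g - Szego n (t + τ^2) g
      = (szegoConst n : ℂ) * (1/b^(n+1) - 1/a^(n+1)) := by
    rw [szego_eq, szego_eq, ← hbdef, ← hadef]
    ring
  have hsub : ‖a - b‖ = τ^2 := by
    rw [W_shift t τ g, Complex.norm_real, Real.norm_eq_abs, abs_of_nonneg (by positivity : (0:ℝ) ≤ τ^2)]
  rw [hdiff, norm_mul, Complex.norm_real, Real.norm_eq_abs,
    abs_of_nonneg (szegoConst_pos n).le]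
  calc szegoConst n * ‖1/b^(n+1) - 1/a^(n+1)‖
      ≤ szegoConst n * ((n+1) * ‖a - b‖ / (hnorm g ^ 2) ^ (n+1+1)) := by
        exact mul_le_mul_of_nonneg_left key (szegoConst_pos n).le
    _ = szegoConst n * (n+1) * τ^2 / hnorm g ^ (2*n+4) := by
        rw [hsub, ← pow_mul]
        have : 2 * (n+1+1) = 2*n+4 := by ring
        rw [this]
        push_cast
        ring

def ballC (n : ℕ) : ℝ≥0∞ := 2 * volume (Metric.ball (0 : Fin n → ℂ) 1)

lemma ballC_ne_top (n : ℕ) : ballC n ≠ ⊤ :=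
  ENNReal.mul_ne_top (by norm_num) measure_ball_lt_top.ne

lemma finrank_pi_complex (n : ℕ) : Module.finrank ℝ (Fin n → ℂ) = 2 * n := by
  rw [Module.finrank_pi_fintype]
  simp [Complex.finrank_real_complex, mul_comm]

lemma measure_hnorm_lt_le (n : ℕ) (hn : 0 < n) {r : ℝ} (hr : 0 < r) :
    volume {g : Heis n | hnorm g < r} ≤ ENNReal.ofReal (r ^ (2*n+2)) * ballC n := by
  have hsub : {g : Heis n | hnorm g < r}
      ⊆ (Set.Ioo (-(r^2)) (r^2)) ×ˢ (Metric.ball (0 : Fin n → ℂ) r) := by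
    rintro ⟨s, z⟩ hg
    simp only [Set.mem_setOf_eq] at hg
    have hA : znormSq z ^ 2 + s ^ 2 < r ^ 4 := by
      rw [← hnorm_pow4 (⟨s, z⟩ : Heis n)]
      exact pow_lt_pow_left₀ hg (hnorm_nonneg _) (by norm_num)
    have hzn := znormSq_nonneg z
    constructor
    · constructor
      · nlinarith [sq_nonneg (s + r^2)]
      · nlinarith [sq_nonneg (s - r^2)]
    · rw [Metric.mem_ball, dist_zero_right]
      rw [pi_norm_lt_iff hr]
      intro j
      have h1 : Complex.normSq (z j) ≤ znormSq z :=
        Finset.single_le_sum (f := fun j => Complex.normSq (z j))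
          (fun _ _ => Complex.normSq_nonneg _) (Finset.mem_univ j)
      have h2 : ‖z j‖ ^ 2 < r ^ 2 := by
        rw [Complex.sq_norm]
        nlinarith
      exact lt_of_pow_lt_pow_left₀ 2 hr.le h2
  refine (measure_mono hsub).trans ?_
  haveI : Nonempty (Fin n) := ⟨⟨0, hn⟩⟩
  rw [show (volume : Measure (Heis n)) = (volume : Measure ℝ).prod volume from
    Measure.volume_eq_prod _ _, Measure.prod_prod, Real.volume_Ioo,
    Measure.addHaar_ball volume 0 hr.le, finrank_pi_complex]
  apply le_of_eq
  unfold ballC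
  rw [← mul_assoc, ← ENNReal.ofReal_mul (by nlinarith : (0:ℝ) ≤ r ^ 2 - -(r ^ 2)),
    show (r ^ 2 - -(r ^ 2)) * r ^ (2*n) = 2 * r ^ (2*n+2) by ring,
    ENNReal.ofReal_mul (by norm_num : (0:ℝ) ≤ 2), ENNReal.ofReal_ofNat]
  ring

lemma dyadic_calc (n : ℕ) {R : ℝ} (hR : 0 < R) (k : ℕ) :
    1 / ((2:ℝ)^k * R) ^ (2*n+4) * ((2:ℝ)^(k+2) * R) ^ (2*n+2)
      = (4 ^ (2*n+2) / R ^ 2) * (1/4 : ℝ) ^ k := by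
  have h2 : (0:ℝ) < 2 ^ k := by positivity
  have e4 : ((2:ℝ)^k)^2 = 4^k := by
    rw [← pow_mul, mul_comm, pow_mul]; norm_num
  have eR : ((1/4:ℝ))^k = 1/((2:ℝ)^k)^2 := by rw [div_pow, one_pow, e4]
  have e1 : ((2:ℝ)^(k+2)) = 4 * 2^k := by ring
  rw [eR, e1]
  field_simp
  ring

lemma geom_quarter_le_two : ∑' k : ℕ, (ENNReal.ofReal (1/4)) ^ k ≤ 2 := by
  rw [ENNReal.tsum_geometric]
  have h1 : (1:ℝ≥0∞) - ENNReal.ofReal (1/4) = ENNReal.ofReal (3/4) := by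
    rw [← ENNReal.ofReal_one, ← ENNReal.ofReal_sub _ (by norm_num : (0:ℝ) ≤ 1/4)]
    norm_num
  rw [h1, show (2:ℝ≥0∞) = (ENNReal.ofReal (1/2))⁻¹ from ?_]
  · exact ENNReal.inv_le_inv.mpr (ENNReal.ofReal_le_ofReal (by norm_num))
  · rw [show (1/2 : ℝ) = (2:ℝ)⁻¹ by norm_num, ENNReal.ofReal_inv_of_pos (by norm_num),
      ENNReal.ofReal_ofNat, inv_inv]

lemma lintegral_hnorm_tail (n : ℕ) (hn : 0 < n) {R : ℝ} (hR : 0 < R) :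
    ∫⁻ g in {g : Heis n | R < hnorm g}, ENNReal.ofReal (1 / hnorm g ^ (2*n+4))
      ≤ ENNReal.ofReal (4 ^ (2*n+2) / R ^ 2) * ballC n * 2 := by
  classical
  set A : ℕ → Set (Heis n) :=
    fun k => {g | 2^k * R < hnorm g ∧ hnorm g ≤ 2^(k+1) * R} with hA
  have hAm : ∀ k, MeasurableSet (A k) := by
    intro k
    have : A k = {g : Heis n | 2^k * R < hnorm g} ∩ {g : Heis n | hnorm g ≤ 2^(k+1) * R} := rfl
    rw [this]
    exact (measurableSet_lt measurable_const continuous_hnorm.measurable).inter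
      (measurableSet_le continuous_hnorm.measurable measurable_const)
  have hcover : {g : Heis n | R < hnorm g} ⊆ ⋃ k, A k := by
    intro g hg
    simp only [Set.mem_setOf_eq] at hg
    have hex : ∃ m, hnorm g ≤ 2^(m+1) * R := by
      obtain ⟨m, hm⟩ := pow_unbounded_of_one_lt (hnorm g / R) (one_lt_two (α := ℝ))
      rw [div_lt_iff₀ hR] at hm
      refine ⟨m, le_of_lt (hm.trans_le ?_)⟩
      have : (2:ℝ)^m ≤ 2^(m+1) := by
        apply pow_le_pow_right₀ (by norm_num) (Nat.le_succ m)
      nlinarith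
    refine Set.mem_iUnion.2 ⟨Nat.find hex, ?_, Nat.find_spec hex⟩
    rcases Nat.eq_zero_or_pos (Nat.find hex) with hk | hk
    · rw [hk]
      simpa using hg
    · have hmin := Nat.find_min hex (Nat.sub_lt hk one_pos)
      push_neg at hmin
      rwa [show Nat.find hex - 1 + 1 = Nat.find hex from Nat.succ_pred_eq_of_pos hk] at hmin
  calc ∫⁻ g in {g : Heis n | R < hnorm g}, ENNReal.ofReal (1 / hnorm g ^ (2*n+4))
      ≤ ∫⁻ g in ⋃ k, A k, ENNReal.ofReal (1 / hnorm g ^ (2*n+4)) :=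
        lintegral_mono_set hcover
    _ ≤ ∑' k, ∫⁻ g in A k, ENNReal.ofReal (1 / hnorm g ^ (2*n+4)) :=
        lintegral_iUnion_le _ _
    _ ≤ ∑' k, ENNReal.ofReal (1 / ((2:ℝ)^k * R) ^ (2*n+4)) * volume (A k) := by
        refine ENNReal.tsum_le_tsum fun k => ?_
        rw [← setLIntegral_const]
        refine setLIntegral_mono' (hAm k) fun g hg => ?_
        apply ENNReal.ofReal_le_ofReal
        apply one_div_le_one_div_of_le (by positivity)
        exact pow_le_pow_left₀ (by positivity) hg.1.le _
    _ ≤ ∑' k, ENNReal.ofReal (1 / ((2:ℝ)^k * R) ^ (2*n+4)) *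
          (ENNReal.ofReal (((2:ℝ)^(k+2) * R) ^ (2*n+2)) * ballC n) := by
        refine ENNReal.tsum_le_tsum fun k => ?_
        gcongr
        refine (measure_mono ?_).trans (measure_hnorm_lt_le n hn (by positivity))
        intro g hg
        simp only [Set.mem_setOf_eq]
        refine lt_of_le_of_lt hg.2 ?_
        have h21 : (2:ℝ)^(k+1) < 2^(k+2) := by
          apply pow_lt_pow_right₀ (by norm_num) (by omega)
        nlinarith
    _ = ∑' k, (ENNReal.ofReal (4 ^ (2*n+2) / R ^ 2) * ballC n) * (ENNReal.ofReal (1/4)) ^ k := by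
        refine tsum_congr fun k => ?_
        rw [← ENNReal.ofReal_pow (by norm_num), ← mul_assoc,
          ← ENNReal.ofReal_mul (by positivity), dyadic_calc n hR k,
          ENNReal.ofReal_mul (by positivity), mul_assoc,
          mul_comm (ENNReal.ofReal ((1/4:ℝ)^k)) (ballC n), ← mul_assoc,
          ENNReal.ofReal_pow (by norm_num)]
    _ ≤ ENNReal.ofReal (4 ^ (2*n+2) / R ^ 2) * ballC n * 2 := by
        rw [ENNReal.tsum_mul_left]
        exact mul_le_mul_right geom_quarter_le_two _

lemma measurable_integrand (n : ℕ) : Measurable fun g : Heis n =>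
    ENNReal.ofReal (1 / hnorm g ^ (2*n+4)) := by
  apply ENNReal.measurable_ofReal.comp
  simp only [one_div]
  exact (continuous_hnorm.measurable.pow_const _).inv

lemma szego_one_param (n : ℕ) (hn : 0 < n) :
    ∃ C : ℝ, 0 < C ∧ ∀ t τ γ : ℝ, 0 < t → 0 < τ → 0 < γ →
      ∫⁻ g in {g : Heis n | γ * τ < hnorm g},
          ENNReal.ofReal ‖Szego n t g - Szego n (t + τ^2) g‖
        ≤ ENNReal.ofReal (C / γ^2) := by
  set K := szegoConst n * (n+1) with hK
  have hKpos : 0 < K := by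
    have := szegoConst_pos n
    positivity
  set D : ℝ≥0∞ := ENNReal.ofReal (4 ^ (2*n+2)) * ballC n * 2 with hD
  have hDtop : D ≠ ⊤ :=
    ENNReal.mul_ne_top (ENNReal.mul_ne_top ENNReal.ofReal_ne_top (ballC_ne_top n)) (by norm_num)
  refine ⟨K * D.toReal + 1, by positivity, fun t τ γ ht hτ hγ => ?_⟩
  have hR : 0 < γ * τ := by positivity
  have hSm : MeasurableSet {g : Heis n | γ * τ < hnorm g} :=
    measurableSet_lt measurable_const continuous_hnorm.measurable
  calc ∫⁻ g in {g : Heis n | γ * τ < hnorm g},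
          ENNReal.ofReal ‖Szego n t g - Szego n (t + τ^2) g‖
      ≤ ∫⁻ g in {g : Heis n | γ * τ < hnorm g},
          ENNReal.ofReal (K * τ^2) * ENNReal.ofReal (1 / hnorm g ^ (2*n+4)) := by
        refine setLIntegral_mono' hSm fun g hg => ?_
        rw [← ENNReal.ofReal_mul (by positivity)]
        apply ENNReal.ofReal_le_ofReal
        have hg0 : 0 < hnorm g := lt_of_le_of_lt hR.le hg
        refine (szego_diff_norm_le n ht hτ hg0).trans (le_of_eq ?_)
        rw [hK]
        push_cast
        ring
    _ = ENNReal.ofReal (K * τ^2) *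
          ∫⁻ g in {g : Heis n | γ * τ < hnorm g}, ENNReal.ofReal (1 / hnorm g ^ (2*n+4)) :=
        lintegral_const_mul _ (measurable_integrand n)
    _ ≤ ENNReal.ofReal (K * τ^2) * (D * ENNReal.ofReal (1 / (γ*τ)^2)) := by
        apply mul_le_mul_right
        refine (lintegral_hnorm_tail n hn hR).trans (le_of_eq ?_)
        rw [hD, div_eq_mul_one_div, ENNReal.ofReal_mul (by positivity)]
        ring
    _ ≤ ENNReal.ofReal ((K * D.toReal + 1) / γ^2) := by
        nth_rewrite 1 [← ENNReal.ofReal_toReal hDtop]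
        rw [← ENNReal.ofReal_mul (by positivity), ← ENNReal.ofReal_mul (by positivity)]
        apply ENNReal.ofReal_le_ofReal
        have heq : K * τ^2 * (D.toReal * (1 / (γ*τ)^2)) = (K * D.toReal) / γ^2 := by
          field_simp
        rw [heq]
        have hDt : 0 ≤ D.toReal := ENNReal.toReal_nonneg
        gcongr
        linarith

/-- Bi-parameter integral estimate for the product of Cauchy–Szegő kernel
differences over the bi-parameter exterior region. -/
theorem szego_kernel_difference_biparameter (n₁ n₂ : ℕ) (hn₁ : 0 < n₁) (hn₂ : 0 < n₂) :
    ∃ C : ℝ, 0 < C ∧ ∀ t₁ t₂ τ₁ τ₂ γ₁ γ₂ : ℝ,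
      0 < t₁ → 0 < t₂ → 0 < τ₁ → 0 < τ₂ → 0 < γ₁ → 0 < γ₂ →
      ∫⁻ g in {g : Heis n₁ × Heis n₂ | γ₁ * τ₁ < hnorm g.1 ∧ γ₂ * τ₂ < hnorm g.2},
          ENNReal.ofReal (‖Szego n₁ t₁ g.1 - Szego n₁ (t₁ + τ₁ ^ 2) g.1‖ *
            ‖Szego n₂ t₂ g.2 - Szego n₂ (t₂ + τ₂ ^ 2) g.2‖)
        ≤ ENNReal.ofReal (C / (γ₁ ^ 2 * γ₂ ^ 2)) := by
  obtain ⟨C₁, hC₁, h₁⟩ := szego_one_param n₁ hn₁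
  obtain ⟨C₂, hC₂, h₂⟩ := szego_one_param n₂ hn₂
  refine ⟨C₁ * C₂, by positivity, fun t₁ t₂ τ₁ τ₂ γ₁ γ₂ ht₁ ht₂ hτ₁ hτ₂ hγ₁ hγ₂ => ?_⟩
  have hmf : Measurable fun x : Heis n₁ =>
      ENNReal.ofReal ‖Szego n₁ t₁ x - Szego n₁ (t₁ + τ₁ ^ 2) x‖ :=
    ENNReal.measurable_ofReal.comp
      (((continuous_szego ht₁).sub (continuous_szego (by positivity))).norm.measurable)
  have hmg : Measurable fun x : Heis n₂ =>
      ENNReal.ofReal ‖Szego n₂ t₂ x - Szego n₂ (t₂ + τ₂ ^ 2) x‖ :=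
    ENNReal.measurable_ofReal.comp
      (((continuous_szego ht₂).sub (continuous_szego (by positivity))).norm.measurable)
  have hset : {g : Heis n₁ × Heis n₂ | γ₁ * τ₁ < hnorm g.1 ∧ γ₂ * τ₂ < hnorm g.2}
      = {x : Heis n₁ | γ₁ * τ₁ < hnorm x} ×ˢ {x : Heis n₂ | γ₂ * τ₂ < hnorm x} := rfl
  calc ∫⁻ g in {g : Heis n₁ × Heis n₂ | γ₁ * τ₁ < hnorm g.1 ∧ γ₂ * τ₂ < hnorm g.2},
          ENNReal.ofReal (‖Szego n₁ t₁ g.1 - Szego n₁ (t₁ + τ₁ ^ 2) g.1‖ *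
            ‖Szego n₂ t₂ g.2 - Szego n₂ (t₂ + τ₂ ^ 2) g.2‖)
      = ∫⁻ g in {x : Heis n₁ | γ₁ * τ₁ < hnorm x} ×ˢ {x : Heis n₂ | γ₂ * τ₂ < hnorm x},
          (ENNReal.ofReal ‖Szego n₁ t₁ g.1 - Szego n₁ (t₁ + τ₁ ^ 2) g.1‖) *
            (ENNReal.ofReal ‖Szego n₂ t₂ g.2 - Szego n₂ (t₂ + τ₂ ^ 2) g.2‖) := by
        rw [hset]
        exact lintegral_congr fun g => ENNReal.ofReal_mul (norm_nonneg _)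
    _ = (∫⁻ x in {x : Heis n₁ | γ₁ * τ₁ < hnorm x},
            ENNReal.ofReal ‖Szego n₁ t₁ x - Szego n₁ (t₁ + τ₁ ^ 2) x‖) *
          ∫⁻ x in {x : Heis n₂ | γ₂ * τ₂ < hnorm x},
            ENNReal.ofReal ‖Szego n₂ t₂ x - Szego n₂ (t₂ + τ₂ ^ 2) x‖ := by
        rw [show (volume : Measure (Heis n₁ × Heis n₂))
            = (volume : Measure (Heis n₁)).prod (volume : Measure (Heis n₂)) from
          Measure.volume_eq_prod _ _, ← Measure.prod_restrict]
        exact lintegral_prod_mul hmf.aemeasurable hmg.aemeasurable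
    _ ≤ ENNReal.ofReal (C₁ / γ₁^2) * ENNReal.ofReal (C₂ / γ₂^2) :=
        mul_le_mul' (h₁ t₁ τ₁ γ₁ ht₁ hτ₁ hγ₁) (h₂ t₂ τ₂ γ₂ ht₂ hτ₂ hγ₂)
    _ = ENNReal.ofReal (C₁ * C₂ / (γ₁ ^ 2 * γ₂ ^ 2)) := by
        rw [← ENNReal.ofReal_mul (by positivity), div_mul_div_comm]
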